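/- If ℕ = X₁ ∪ ⋯ ∪ X_k and f : ℕ → ℚ is monotonic on each Xᵢ, then there are at most k points p ∈ ℝ ∪ {±∞} such that every neighborhood of p contains infinitely many values of f; consequently there exists a rational q and an open neighborhood U of q with U ∩ f(ℕ) ⊆ {q}, so f is not surjective onto ℚ. -/

import Mathlib

open Filter Set Topology

-- helper lemma 1: no acc point of finite set in T1 space
lemma finite_not_accPt {X : Type*} [TopologicalSpace X] [T1Space X] {C : Set X} (hC : C.Finite)
    (p : X) : ¬ AccPt p (𝓟 C) := by
  intro h
  rw [accPt_principal_iff_clusterPt, ← mem_closure_iff_clusterPt,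
    ((hC.diff).isClosed).closure_eq] at h
  exact h.2 rfl

-- helper lemma 2: acc points of range of monotone seq equal the sup
lemma accPt_range_monotone {α : Type*} [CompleteLinearOrder α] [TopologicalSpace α]
    [OrderTopology α] [T1Space α] {g : ℕ → α} (hg : Monotone g) {p : α}
    (hp : AccPt p (𝓟 (Set.range g))) : p = ⨆ n, g n := by
  have hcl : p ∈ closure (Set.range g \ {p}) := by
    rw [accPt_principal_iff_clusterPt] at hp
    exact mem_closure_iff_clusterPt.2 hp
  have hle : p ≤ ⨆ n, g n := by
    have : closure (Set.range g \ {p}) ⊆ Set.Iic (⨆ n, g n) := by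
      apply closure_minimal _ isClosed_Iic
      rintro x ⟨⟨n, rfl⟩, -⟩
      exact le_iSup g n
    exact this hcl
  rcases eq_or_lt_of_le hle with h | h
  · exact h
  · exfalso
    obtain ⟨N, hN⟩ := lt_iSup_iff.mp h
    have hsub : Set.range g \ {p} ⊆ ((g '' Set.Iio N) \ {p}) ∪ Set.Ici (g N) := by
      rintro x ⟨⟨m, rfl⟩, hx⟩
      rcases lt_or_ge m N with hm | hm
      · exact Or.inl ⟨⟨m, hm, rfl⟩, hx⟩
      · exact Or.inr (hg hm)
    have hclosed : IsClosed (((g '' Set.Iio N) \ {p}) ∪ Set.Ici (g N)) :=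
      (((Set.finite_Iio N).image g).diff).isClosed.union isClosed_Ici
    have := closure_minimal hsub hclosed hcl
    rcases this with h' | h'
    · exact h'.2 rfl
    · exact absurd h' (not_le.2 hN)

lemma accPt_biUnion {ι X : Type*} [TopologicalSpace X] (s : Finset ι) (t : ι → Set X) (p : X)
    (h : AccPt p (𝓟 (⋃ i ∈ s, t i))) : ∃ i ∈ s, AccPt p (𝓟 (t i)) := by
  classical
  induction s using Finset.induction_on with
  | empty =>
    simp [AccPt] at h
    exact absurd rfl h.ne'
  | @insert a s' hni ih =>
    rw [Finset.set_biUnion_insert, ← Filter.sup_principal, accPt_sup] at h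
    rcases h with h | h
    · exact ⟨a, Finset.mem_insert_self _ _, h⟩
    · obtain ⟨i, hi, hacc⟩ := ih h
      exact ⟨i, Finset.mem_insert_of_mem hi, hacc⟩

lemma accPt_range_antitone {α : Type*} [CompleteLinearOrder α] [TopologicalSpace α]
    [OrderTopology α] [T1Space α] {g : ℕ → α} (hg : Antitone g) {p : α}
    (hp : AccPt p (𝓟 (Set.range g))) : p = ⨅ n, g n := by
  have h2 : AccPt (OrderDual.toDual p)
      (𝓟 (Set.range (OrderDual.toDual ∘ g)) : Filter αᵒᵈ) := hp
  have := accPt_range_monotone (α := αᵒᵈ) hg.dual_right h2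
  apply OrderDual.toDual.injective
  rw [toDual_iInf]
  exact this

/-- If `ℕ = X₁ ∪ ⋯ ∪ X_k` and `f : ℕ → ℚ` is monotonic on each `Xᵢ`, then the
values of `f` have at most `k` limit points in `ℝ ∪ {±∞}`; consequently some
rational `q` has an open neighborhood `U` with `U ∩ f(ℕ) ⊆ {q}`, and `f` is not
surjective onto `ℚ`. -/
theorem stmt13 (f : ℕ → ℚ) (k : ℕ) (X : Fin k → Set ℕ)
    (hcover : (⋃ i, X i) = Set.univ)
    (hmono : ∀ i, MonotoneOn f (X i) ∨ AntitoneOn f (X i)) :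
    (∃ S : Finset EReal, S.card ≤ k ∧
      {p : EReal | AccPt p (Filter.principal
        ((fun q : ℚ => ((q : ℝ) : EReal)) '' Set.range f))} ⊆ ↑S) ∧
    (∃ q : ℚ, ∃ U : Set ℚ, IsOpen U ∧ q ∈ U ∧ U ∩ Set.range f ⊆ {q}) ∧
    ¬ Function.Surjective f := by
  classical
  set e : ℚ → EReal := fun q : ℚ => ((q : ℝ) : EReal) with he_def
  have he : Function.Injective e := by
    intro a b hab
    simpa [he_def] using hab
  have hecont : Continuous e :=
    continuous_coe_real_ereal.comp Rat.continuous_coe_real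
  have hemono : Monotone e := by
    intro a b hab
    simp only [he_def, EReal.coe_le_coe_iff]
    exact_mod_cast hab
  set T : Set EReal := e '' Set.range f with hT_def
  set Ts : Fin k → Set EReal := fun i => e '' (f '' X i) with hTs_def
  have hTU : T = ⋃ i, Ts i := by
    rw [hT_def, ← Set.image_univ, ← hcover, Set.image_iUnion, Set.image_iUnion]
  -- each piece has a unique possible accumulation point
  have key : ∀ i, ∃ L : EReal, ∀ p, AccPt p (𝓟 (Ts i)) → p = L := by
    intro i
    rcases Set.finite_or_infinite (X i) with hfin | hinf
    · exact ⟨0, fun p hp => absurd hp (finite_not_accPt ((hfin.image f).image e) p)⟩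
    · have hinf' : {n | n ∈ X i}.Infinite := hinf
      set nth : ℕ → ℕ := Nat.nth (· ∈ X i) with hnth_def
      have hnth_mem : ∀ m, nth m ∈ X i := fun m => Nat.nth_mem_of_infinite hinf' m
      have hnth_mono : Monotone nth := Nat.nth_monotone hinf'
      set g : ℕ → EReal := fun m => e (f (nth m)) with hg_def
      have hrange : Set.range g = Ts i := by
        rw [hTs_def]
        have : Set.range g = e '' (f '' Set.range nth) := by
          rw [← Set.range_comp, ← Set.range_comp]; rfl
        rw [this, Nat.range_nth_of_infinite hinf']
        rfl
      rcases hmono i with hm | hm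
      · refine ⟨⨆ n, g n, fun p hp => ?_⟩
        refine accPt_range_monotone ?_ (by rwa [hrange])
        intro a b hab
        exact hemono (hm (hnth_mem a) (hnth_mem b) (hnth_mono hab))
      · refine ⟨⨅ n, g n, fun p hp => ?_⟩
        refine accPt_range_antitone ?_ (by rwa [hrange])
        intro a b hab
        exact hemono (hm (hnth_mem a) (hnth_mem b) (hnth_mono hab))
  choose L hL using key
  set S : Finset EReal := Finset.image L Finset.univ with hS_def
  have hAS : {p : EReal | AccPt p (𝓟 T)} ⊆ ↑S := by
    intro p hp
    have hp' : AccPt p (𝓟 (⋃ i ∈ Finset.univ, Ts i)) := by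
      have heq : (⋃ i ∈ Finset.univ, Ts i) = ⋃ i, Ts i := by simp
      rw [heq]
      rw [Set.mem_setOf_eq, hTU] at hp
      exact hp
    obtain ⟨i, -, hacc⟩ := accPt_biUnion Finset.univ Ts p hp'
    rw [hL i p hacc]
    simp [hS_def]
  have hcard : S.card ≤ k := le_trans (Finset.card_image_le) (by simp)
  -- pick a rational avoiding S
  have hq : ∃ q : ℚ, e q ∉ (S : Set EReal) := by
    by_contra hc
    push_neg at hc
    have : Set.range e ⊆ (S : Set EReal) := Set.range_subset_iff.2 hc
    exact (Set.infinite_range_of_injective he) (S.finite_toSet.subset this)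
  obtain ⟨q, hqS⟩ := hq
  have hnacc : ¬ AccPt (e q) (𝓟 T) := fun h => hqS (hAS h)
  rw [accPt_iff_nhds] at hnacc
  push_neg at hnacc
  obtain ⟨V, hV, hVq⟩ := hnacc
  obtain ⟨W, hWV, hWopen, hWq⟩ := mem_nhds_iff.mp hV
  refine ⟨⟨S, hcard, hAS⟩, ⟨q, e ⁻¹' W, hecont.isOpen_preimage W hWopen, hWq, ?_⟩, ?_⟩
  · rintro q' ⟨hq'W, hq'r⟩
    have : e q' = e q := hVq (e q') ⟨hWV hq'W, Set.mem_image_of_mem e hq'r⟩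
    exact he this
  · intro hs
    have hiqU : ∃ q : ℚ, ∃ U : Set ℚ, IsOpen U ∧ q ∈ U ∧ U ∩ Set.range f ⊆ {q} := by
      refine ⟨q, e ⁻¹' W, hecont.isOpen_preimage W hWopen, hWq, ?_⟩
      rintro q' ⟨hq'W, hq'r⟩
      have : e q' = e q := hVq (e q') ⟨hWV hq'W, Set.mem_image_of_mem e hq'r⟩
      exact he this
    obtain ⟨q0, U, hUopen, hq0U, hUsub⟩ := hiqU
    have hrange : Set.range f = Set.univ := hs.range_eq
    have hU1 : U ⊆ {q0} := by
      intro x hx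
      exact hUsub ⟨hx, hrange ▸ Set.mem_univ x⟩
    have hUnhds : U ∈ 𝓝 q0 := hUopen.mem_nhds hq0U
    have : U ∩ {q0}ᶜ ∈ 𝓝[≠] q0 :=
      Filter.inter_mem (mem_nhdsWithin_of_mem_nhds hUnhds) self_mem_nhdsWithin
    obtain ⟨y, hyU, hyne⟩ := Filter.nonempty_of_mem this
    exact hyne (hU1 hyU)
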